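/- Let m₁ = x²y, m₂ = x²z, m₃ = xy², m₄ = y²z, m₅ = xz², m₆ = yz² in ℂ[x,y,z] (the six monomials defining the Togliatti surface), and for (a,b,c) ∈ ℂ³ let H(a,b,c) be the 6×6 matrix whose (i,j)-entry is the second-order partial derivative of mᵢ with respect to the j-th of the six pairs (x,x), (y,y), (z,z), (x,y), (x,z), (y,z), evaluated at (a,b,c). Then det H(a,b,c) = 0 for all (a,b,c) ∈ ℂ³; i.e. the Togliatti surface satisfies at least one Laplace equation of order 2. -/

import Mathlib

open MvPolynomial

/-- The six Togliatti monomials x²y, x²z, xy², y²z, xz², yz². -/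
noncomputable def togliattiMonomials : Fin 6 → MvPolynomial (Fin 3) ℂ :=
  ![X 0 ^ 2 * X 1, X 0 ^ 2 * X 2, X 0 * X 1 ^ 2,
    X 1 ^ 2 * X 2, X 0 * X 2 ^ 2, X 1 * X 2 ^ 2]

/-- The six unordered pairs of variables (x,x),(y,y),(z,z),(x,y),(x,z),(y,z). -/
def varPairs : Fin 6 → Fin 3 × Fin 3 :=
  ![(0, 0), (1, 1), (2, 2), (0, 1), (0, 2), (1, 2)]

/-- The 6×6 matrix of all second-order partial derivatives of the six Togliatti
monomials, evaluated at a point of ℂ³. -/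
noncomputable def togliattiHessian (v : Fin 3 → ℂ) : Matrix (Fin 6) (Fin 6) ℂ :=
  Matrix.of fun i j =>
    eval v (pderiv (varPairs j).1 (pderiv (varPairs j).2 (togliattiMonomials i)))

lemma vp0 : varPairs 0 = (0,0) := rfl
lemma vp1 : varPairs 1 = (1,1) := rfl
lemma vp2 : varPairs 2 = (2,2) := rfl
lemma vp3 : varPairs 3 = (0,1) := rfl
lemma vp4 : varPairs 4 = (0,2) := rfl
lemma vp5 : varPairs 5 = (1,2) := rfl
lemma tm0 : togliattiMonomials 0 = X 0 ^ 2 * X 1 := rfl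
lemma tm1 : togliattiMonomials 1 = X 0 ^ 2 * X 2 := rfl
lemma tm2 : togliattiMonomials 2 = X 0 * X 1 ^ 2 := rfl
lemma tm3 : togliattiMonomials 3 = X 1 ^ 2 * X 2 := rfl
lemma tm4 : togliattiMonomials 4 = X 0 * X 2 ^ 2 := rfl
lemma tm5 : togliattiMonomials 5 = X 1 * X 2 ^ 2 := rfl

lemma cv5 {α : Type*} (x0 x1 x2 x3 x4 x5 : α) : ![x0,x1,x2,x3,x4,x5] 5 = x5 := rfl
lemma cv4 {α : Type*} (x0 x1 x2 x3 x4 x5 : α) : ![x0,x1,x2,x3,x4,x5] 4 = x4 := rfl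
lemma cv3 {α : Type*} (x0 x1 x2 x3 x4 x5 : α) : ![x0,x1,x2,x3,x4,x5] 3 = x3 := rfl
lemma cv2 {α : Type*} (x0 x1 x2 x3 x4 x5 : α) : ![x0,x1,x2,x3,x4,x5] 2 = x2 := rfl
lemma cv1 {α : Type*} (x0 x1 x2 x3 x4 x5 : α) : ![x0,x1,x2,x3,x4,x5] 1 = x1 := rfl
lemma cv0 {α : Type*} (x0 x1 x2 x3 x4 x5 : α) : ![x0,x1,x2,x3,x4,x5] 0 = x0 := rfl

set_option maxHeartbeats 1000000 in
/-- Explicit form of the Togliatti Hessian-type matrix. -/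
lemma hess_eq (a b c : ℂ) : togliattiHessian ![a, b, c] =
    !![2*b, 0, 0, 2*a, 0, 0;
    2*c, 0, 0, 0, 2*a, 0;
    0, 2*a, 0, 2*b, 0, 0;
    0, 2*c, 0, 0, 0, 2*b;
    0, 0, 2*a, 0, 2*c, 0;
    0, 0, 2*b, 0, 0, 2*c] := by
  ext i j
  fin_cases i <;> fin_cases j <;>
    simp [togliattiHessian, vp0, vp1, vp2, vp3, vp4, vp5,
      tm0, tm1, tm2, tm3, tm4, tm5, pderiv_mul, pderiv_X, Pi.single_apply, sq,
      cv0, cv1, cv2, cv3, cv4, cv5] <;> try (first | rfl | ring)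
  all_goals rfl

set_option maxHeartbeats 4000000 in
set_option maxRecDepth 8000 in
/-- The determinant of the matrix of second-order partials of the six Togliatti
monomials vanishes identically: the Togliatti surface satisfies at least one
Laplace equation of order 2. -/
theorem togliatti_hessian_det_zero (a b c : ℂ) :
    (togliattiHessian ![a, b, c]).det = 0 := by
  rw [hess_eq]
  simp [Matrix.det_succ_row_zero, Fin.sum_univ_succ, Fin.succAbove, Fin.castSucc,
    Fin.castAdd, Fin.castLE]
  ring
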